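/- Suppose the metric d on X is bounded. Then d_Em is a metric on E if and only if θ = (sup d)/M ≤ 1. -/

import Mathlib

/-- `ρ` is a metric: zero iff equal, symmetric, triangle inequality. -/
def IsMetric {α : Type*} (ρ : α → α → ℝ) : Prop :=
  (∀ x y, ρ x y = 0 ↔ x = y) ∧ (∀ x y, ρ x y = ρ y x) ∧
    ∀ x y z, ρ x z ≤ ρ x y + ρ y z

def IsCauchyWith {α : Type*} (ρ : α → α → ℝ) (S : ℕ → α) : Prop :=
  ∀ ε : ℝ, 0 < ε → ∃ N : ℕ, ∀ m ≥ N, ∀ n ≥ N, ρ (S m) (S n) < ε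

def TendsToWith {α : Type*} (ρ : α → α → ℝ) (S : ℕ → α) (l : α) : Prop :=
  ∀ ε : ℝ, 0 < ε → ∃ N : ℕ, ∀ n ≥ N, ρ (S n) l < ε

def IsCompleteWith {α : Type*} (ρ : α → α → ℝ) : Prop :=
  ∀ S : ℕ → α, IsCauchyWith ρ S → ∃ l, TendsToWith ρ S l

/-- the topology generated by the open balls of `ρ` -/
def topOf {α : Type*} (ρ : α → α → ℝ) : TopologicalSpace α :=
  TopologicalSpace.generateFrom {s | ∃ (x : α) (ε : ℝ), s = {y | ρ x y < ε}}

/-- `sup d`, the supremum of all distances in `X` -/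
noncomputable def supD (X : Type*) [MetricSpace X] : ℝ :=
  sSup {r : ℝ | ∃ x y : X, dist x y = r}

/-- The multiset distance `d_E`: enumerate `a` and `c` with multiplicity in all possible
orders; the shorter enumeration is matched against an initial part of the other, taking
the sum of the distances of matched pairs plus the notional part `M * |C(c) - C(a)|`;
`d_E` is the least such value. -/
noncomputable def dE {X : Type*} [MetricSpace X] (M : ℝ) (a c : Multiset X) : ℝ :=
  sInf {r : ℝ | ∃ la lc : List X, (la : Multiset X) = a ∧ (lc : Multiset X) = c ∧
    r = (List.zipWith dist la lc).sum + M * |(c.card : ℝ) - (a.card : ℝ)|}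

/-- `d_Em`, the mean version of `d_E` (equal to `0` on the pair of empty multisets). -/
noncomputable def dEm {X : Type*} [MetricSpace X] (M : ℝ) (a c : Multiset X) : ℝ :=
  dE M a c / (max a.card c.card : ℕ)


namespace DEaux

variable {X : Type*} [MetricSpace X]

def dES (M : ℝ) (a c : Multiset X) : Set ℝ :=
  {r : ℝ | ∃ la lc : List X, (la : Multiset X) = a ∧ (lc : Multiset X) = c ∧
    r = (List.zipWith dist la lc).sum + M * |(Multiset.card c : ℝ) - (Multiset.card a : ℝ)|}

lemma dE_eq (M : ℝ) (a c : Multiset X) : dE M a c = sInf (dES M a c) := rfl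

lemma zipsum_nonneg : ∀ (l₁ l₂ : List X), 0 ≤ (List.zipWith dist l₁ l₂).sum
  | [], _ => by simp
  | _ :: _, [] => by simp
  | x :: l₁, y :: l₂ => by
      simp only [List.zipWith_cons_cons, List.sum_cons]
      exact add_nonneg dist_nonneg (zipsum_nonneg l₁ l₂)

lemma dES_nonempty (M : ℝ) (a c : Multiset X) : (dES M a c).Nonempty :=
  ⟨_, a.toList, c.toList, a.coe_toList, c.coe_toList, rfl⟩

lemma dES_lb (hM : 0 ≤ M) (a c : Multiset X) :
    ∀ r ∈ dES M a c, M * |(Multiset.card c : ℝ) - (Multiset.card a : ℝ)| ≤ r := by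
  rintro r ⟨la, lc, h1, h2, rfl⟩
  have := zipsum_nonneg la lc
  linarith

lemma dES_bdd (hM : 0 ≤ M) (a c : Multiset X) : BddBelow (dES M a c) :=
  ⟨_, dES_lb hM a c⟩

lemma dES_finite (M : ℝ) (a c : Multiset X) : (dES M a c).Finite := by
  have h : dES M a c ⊆ (fun p : List X × List X =>
      (List.zipWith dist p.1 p.2).sum + M * |(Multiset.card c : ℝ) - (Multiset.card a : ℝ)|) ''
      ({l | l ∈ a.toList.permutations} ×ˢ {l | l ∈ c.toList.permutations}) := by
    rintro r ⟨la, lc, h1, h2, rfl⟩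
    refine ⟨(la, lc), ⟨?_, ?_⟩, rfl⟩
    · simp only [Set.mem_setOf_eq, List.mem_permutations]
      rw [← Multiset.coe_eq_coe, a.coe_toList, h1]
    · simp only [Set.mem_setOf_eq, List.mem_permutations]
      rw [← Multiset.coe_eq_coe, c.coe_toList, h2]
  exact Set.Finite.subset (Set.Finite.image _ (Set.Finite.prod
    (a.toList.permutations.finite_toSet) (c.toList.permutations.finite_toSet))) h

lemma dE_le (hM : 0 ≤ M) {a c : Multiset X} {la lc : List X}
    (h1 : (la : Multiset X) = a) (h2 : (lc : Multiset X) = c) :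
    dE M a c ≤ (List.zipWith dist la lc).sum + M * |(Multiset.card c : ℝ) - (Multiset.card a : ℝ)| :=
  csInf_le (dES_bdd hM a c) ⟨la, lc, h1, h2, rfl⟩

lemma dE_gap_le (hM : 0 ≤ M) (a c : Multiset X) :
    M * |(Multiset.card c : ℝ) - (Multiset.card a : ℝ)| ≤ dE M a c :=
  le_csInf (dES_nonempty M a c) (dES_lb hM a c)

lemma dE_nonneg (hM : 0 ≤ M) (a c : Multiset X) : 0 ≤ dE M a c :=
  le_trans (by positivity) (dE_gap_le hM a c)

lemma dE_attained (M : ℝ) (a c : Multiset X) :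
    ∃ la lc : List X, (la : Multiset X) = a ∧ (lc : Multiset X) = c ∧
      dE M a c = (List.zipWith dist la lc).sum +
        M * |(Multiset.card c : ℝ) - (Multiset.card a : ℝ)| :=
  (dES_nonempty M a c).csInf_mem (dES_finite M a c)

lemma dE_comm (M : ℝ) (a c : Multiset X) : dE M a c = dE M c a := by
  have key : ∀ a c : Multiset X, dES M a c ⊆ dES M c a := by
    rintro a c r ⟨la, lc, h1, h2, rfl⟩
    exact ⟨lc, la, h2, h1, by
      rw [List.zipWith_comm_of_comm dist_comm (l := la) (l' := lc), abs_sub_comm]⟩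
  rw [dE_eq, dE_eq, Set.Subset.antisymm (key a c) (key c a)]

lemma dE_empty_left (hM : 0 ≤ M) (c : Multiset X) :
    dE M 0 c = M * Multiset.card c := by
  refine le_antisymm ?_ ?_
  · have := dE_le hM (a := (0 : Multiset X)) (c := c) (la := []) (lc := c.toList)
      (by simp) c.coe_toList
    simpa using this
  · have := dE_gap_le hM (0 : Multiset X) c
    simpa using this

lemma dE_cons_cons (hM : 0 ≤ M) (x y : X) (a c : Multiset X) :
    dE M (x ::ₘ a) (y ::ₘ c) ≤ dist x y + dE M a c := by
  obtain ⟨la, lc, h1, h2, heq⟩ := dE_attained M a c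
  have h1' : ((x :: la : List X) : Multiset X) = x ::ₘ a := by rw [← Multiset.cons_coe, h1]
  have h2' : ((y :: lc : List X) : Multiset X) = y ::ₘ c := by rw [← Multiset.cons_coe, h2]
  have := dE_le hM h1' h2'
  simp only [List.zipWith_cons_cons, List.sum_cons] at this
  calc dE M (x ::ₘ a) (y ::ₘ c) ≤ _ := this
    _ = dist x y + dE M a c := by
        rw [heq, show ((Multiset.card (y ::ₘ c) : ℝ) - (Multiset.card (x ::ₘ a) : ℝ))
          = ((Multiset.card c : ℝ) - Multiset.card a) by
            push_cast [Multiset.card_cons]; ring]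
        ring



-- ===== Part 2: matching lemmas =====

lemma lemmaB (hM : 0 ≤ M) (p : Multiset (X × X)) (c₀ : Multiset X) :
    dE M (p.map Prod.fst) (p.map Prod.snd + c₀) ≤
      (p.map fun q => dist q.1 q.2).sum + M * Multiset.card c₀ := by
  induction p using Multiset.induction_on with
  | empty => simp [dE_empty_left hM]
  | cons q p ih =>
      obtain ⟨x, y⟩ := q
      simp only [Multiset.map_cons, Multiset.sum_cons, Multiset.cons_add]
      calc dE M (x ::ₘ p.map Prod.fst) (y ::ₘ (p.map Prod.snd + c₀))
          ≤ dist x y + dE M (p.map Prod.fst) (p.map Prod.snd + c₀) := dE_cons_cons hM x y _ _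
        _ ≤ dist x y + ((p.map fun q => dist q.1 q.2).sum + M * Multiset.card c₀) := by
            linarith [ih]
        _ = _ := by ring

lemma lemmaB' (hM : 0 ≤ M) (hS : ∀ x y : X, dist x y ≤ M)
    (p : Multiset (X × X)) (a₀ c₀ : Multiset X) (h : Multiset.card a₀ ≤ Multiset.card c₀) :
    dE M (p.map Prod.fst + a₀) (p.map Prod.snd + c₀) ≤
      (p.map fun q => dist q.1 q.2).sum + M * Multiset.card c₀ := by
  induction a₀ using Multiset.induction_on generalizing p c₀ with
  | empty => simpa using lemmaB hM p c₀
  | cons x a₀ ih =>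
      have hc : c₀ ≠ 0 := by
        intro h0; rw [h0] at h; simp at h
      obtain ⟨y, hy⟩ := Multiset.exists_mem_of_ne_zero hc
      obtain ⟨c₀', rfl⟩ := Multiset.exists_cons_of_mem hy
      have h' : Multiset.card a₀ ≤ Multiset.card c₀' := by
        simpa using h
      have := ih ((x, y) ::ₘ p) c₀' h'
      simp only [Multiset.map_cons, Multiset.sum_cons] at this
      calc dE M (p.map Prod.fst + (x ::ₘ a₀)) (p.map Prod.snd + (y ::ₘ c₀'))
          = dE M (x ::ₘ p.map Prod.fst + a₀) (y ::ₘ p.map Prod.snd + c₀') := by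
            congr 1 <;> simp [Multiset.cons_add, Multiset.add_cons]
        _ ≤ dist x y + (p.map fun q => dist q.1 q.2).sum + M * Multiset.card c₀' := by
            rw [show (x ::ₘ p.map Prod.fst + a₀ : Multiset X)
                = ((x, y) ::ₘ p).map Prod.fst + a₀ by simp [Multiset.cons_add]]
            rw [show (y ::ₘ p.map Prod.snd + c₀' : Multiset X)
                = ((x, y) ::ₘ p).map Prod.snd + c₀' by simp [Multiset.cons_add]]
            calc _ ≤ _ := ih ((x, y) ::ₘ p) c₀' h'
              _ = _ := by simp [Multiset.map_cons, Multiset.sum_cons]; try ring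
        _ ≤ (p.map fun q => dist q.1 q.2).sum + M * Multiset.card (y ::ₘ c₀') := by
            have := hS x y
            simp only [Multiset.card_cons]
            push_cast
            linarith

lemma dE_le_Mmax (hM : 0 ≤ M) (hS : ∀ x y : X, dist x y ≤ M)
    {a c : Multiset X} (h : Multiset.card a ≤ Multiset.card c) :
    dE M a c ≤ M * Multiset.card c := by
  have := lemmaB' hM hS 0 a c h
  simpa using this


-- ===== Part 3: padding, join, core =====

noncomputable def dd (M : ℝ) : Option X → Option X → ℝ
  | some x, some y => dist x y
  | none, none => 0
  | _, _ => M

@[simp] lemma dd_some_some (M : ℝ) (x y : X) : dd M (some x) (some y) = dist x y := rfl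
@[simp] lemma dd_none_none (M : ℝ) : dd M (none : Option X) none = 0 := rfl
@[simp] lemma dd_some_none (M : ℝ) (x : X) : dd M (some x) none = M := rfl
@[simp] lemma dd_none_some (M : ℝ) (y : X) : dd M (none : Option X) (some y) = M := rfl

def reals (s : Multiset (Option X)) : Multiset X :=
  s.bind fun o => o.elim 0 (fun x => {x})

@[simp] lemma reals_zero : reals (0 : Multiset (Option X)) = 0 := by
  simp [reals]

@[simp] lemma reals_cons_some (x : X) (s : Multiset (Option X)) :
    reals (some x ::ₘ s) = x ::ₘ reals s := by
  simp [reals, Multiset.cons_bind, Option.elim, ← Multiset.singleton_add]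

@[simp] lemma reals_cons_none (s : Multiset (Option X)) :
    reals ((none : Option X) ::ₘ s) = reals s := by
  simp [reals, Multiset.cons_bind, Option.elim]

lemma reals_map_some (s : Multiset X) : reals (s.map some) = s := by
  induction s using Multiset.induction_on with
  | empty => simp
  | cons x s ih => simp [ih]

lemma reals_replicate_none (k : ℕ) :
    reals (Multiset.replicate k (none : Option X)) = 0 := by
  induction k with
  | zero => simp
  | succ k ih => simp [Multiset.replicate_succ, ih]

def pad (n : ℕ) (l : List X) : List (Option X) :=
  l.map some ++ List.replicate (n - l.length) none

lemma pad_length {n : ℕ} {l : List X} (h : l.length ≤ n) : (pad n l).length = n := by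
  simp [pad]; omega

lemma pad_coe (n : ℕ) (l : List X) :
    ((pad n l : List (Option X)) : Multiset (Option X))
      = Multiset.map some ↑l + Multiset.replicate (n - l.length) none := by
  simp [pad, ← Multiset.coe_add, Multiset.map_coe, Multiset.coe_replicate]

lemma reals_pad (n : ℕ) (l : List X) :
    reals ((pad n l : List (Option X)) : Multiset (Option X)) = ↑l := by
  rw [pad_coe]
  have hadd : ∀ s t : Multiset (Option X), reals (s + t) = reals s + reals t := by
    intro s t; simp [reals, Multiset.add_bind]
  rw [hadd, reals_map_some, reals_replicate_none, add_zero]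

lemma pad_cons (n : ℕ) (x : X) (l : List X) :
    pad (n + 1) (x :: l) = some x :: pad n l := by
  simp [pad, List.length_cons, Nat.succ_sub_succ]

lemma pad_nil_succ (n : ℕ) :
    pad (n + 1) ([] : List X) = none :: pad n [] := by
  simp [pad, List.replicate_succ]

lemma padsum (M : ℝ) : ∀ (n : ℕ) (l₁ l₂ : List X), l₁.length ≤ n → l₂.length ≤ n →
    (List.zipWith (dd M) (pad n l₁) (pad n l₂)).sum
      = (List.zipWith dist l₁ l₂).sum
        + M * (((l₁.length - l₂.length) + (l₂.length - l₁.length) : ℕ) : ℝ)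
  | 0, l₁, l₂, h₁, h₂ => by
      have e1 : l₁ = [] := List.length_eq_zero_iff.mp (Nat.le_zero.mp h₁)
      have e2 : l₂ = [] := List.length_eq_zero_iff.mp (Nat.le_zero.mp h₂)
      subst e1; subst e2; simp [pad]
  | (n+1), [], [] , h₁, h₂ => by
      have := padsum M n [] [] (by simp) (by simp)
      rw [pad_nil_succ, List.zipWith_cons_cons, List.sum_cons, this]
      simp
  | (n+1), [], y :: l₂, h₁, h₂ => by
      have := padsum M n [] l₂ (by simp) (by simpa using Nat.lt_succ_iff.mp h₂)
      rw [pad_nil_succ, pad_cons, List.zipWith_cons_cons, List.sum_cons, this]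
      simp only [List.length_nil, List.zipWith_nil_left, List.sum_nil, List.length_cons,
        dd_none_some, Nat.zero_sub, Nat.sub_zero]
      push_cast
      ring
  | (n+1), x :: l₁, [], h₁, h₂ => by
      have := padsum M n l₁ [] (by simpa using Nat.lt_succ_iff.mp h₁) (by simp)
      rw [pad_nil_succ, pad_cons, List.zipWith_cons_cons, List.sum_cons, this]
      simp only [List.length_nil, List.zipWith_nil_right, List.sum_nil, List.length_cons,
        dd_some_none, Nat.zero_sub, Nat.sub_zero]
      push_cast
      ring
  | (n+1), x :: l₁, y :: l₂, h₁, h₂ => by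
      have := padsum M n l₁ l₂ (by simpa using Nat.lt_succ_iff.mp h₁)
        (by simpa using Nat.lt_succ_iff.mp h₂)
      rw [pad_cons, pad_cons, List.zipWith_cons_cons, List.sum_cons, this,
        List.zipWith_cons_cons, List.sum_cons]
      simp only [List.length_cons, Nat.add_sub_add_right, dd_some_some]
      ring

lemma natgap_eq (p q : ℕ) : (((q - p) + (p - q) : ℕ) : ℝ) = |(q : ℝ) - (p : ℝ)| := by
  rcases le_total p q with h | h
  · rw [Nat.sub_eq_zero_of_le h, add_zero, Nat.cast_sub h,
      abs_of_nonneg (by exact sub_nonneg.mpr (Nat.cast_le.mpr h))]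
  · rw [Nat.sub_eq_zero_of_le h, zero_add, Nat.cast_sub h,
      abs_of_nonpos (by exact sub_nonpos.mpr (Nat.cast_le.mpr h)), neg_sub]

lemma join {τ₁ τ₂ τ₃ : Type*} :
    ∀ (P₁ : Multiset (τ₁ × τ₂)) (P₂ : Multiset (τ₂ × τ₃)),
    P₁.map Prod.snd = P₂.map Prod.fst →
    ∃ Q : Multiset (τ₁ × τ₂ × τ₃),
      Q.map (fun q => (q.1, q.2.1)) = P₁ ∧ Q.map Prod.snd = P₂ := by
  classical
  intro P₁
  induction P₁ using Multiset.induction_on with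
  | empty =>
      intro P₂ h
      have h0 : Multiset.map Prod.fst P₂ = (0 : Multiset τ₂) := by simpa using h.symm
      have : P₂ = 0 := Multiset.map_eq_zero.mp h0
      exact ⟨0, by simp, by simp [this]⟩
  | cons q P₁ ih =>
      intro P₂ h
      obtain ⟨x, y⟩ := q
      simp only [Multiset.map_cons] at h
      have hy : y ∈ P₂.map Prod.fst := by rw [← h]; exact Multiset.mem_cons_self _ _
      obtain ⟨q₂, hq₂, hq₂1⟩ := Multiset.mem_map.mp hy
      obtain ⟨y', z⟩ := q₂
      subst hq₂1
      obtain ⟨P₂', rfl⟩ := Multiset.exists_cons_of_mem hq₂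
      simp only [Multiset.map_cons] at h
      have h' : P₁.map Prod.snd = P₂'.map Prod.fst :=
        (Multiset.cons_inj_right _).mp h
      obtain ⟨Q', hQ1, hQ2⟩ := ih P₂' h'
      exact ⟨(x, y', z) ::ₘ Q', by simp [hQ1], by simp [hQ2]⟩

lemma coreQ (hM : 0 ≤ M) (hS : ∀ x y : X, dist x y ≤ M)
    (Q : Multiset (Option X × Option X × Option X)) :
    ∃ (p : Multiset (X × X)) (xs zs : Multiset X) (w : ℕ),
      reals (Q.map fun q => q.1) = p.map Prod.fst + xs ∧
      reals (Q.map fun q => q.2.2) = p.map Prod.snd + zs ∧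
      Multiset.card (reals (Q.map fun q => q.2.1))
        ≤ Multiset.card (reals (Q.map fun q => q.2.2)) + w ∧
      (p.map fun q => dist q.1 q.2).sum + M * Multiset.card zs + M * w
        ≤ (Q.map fun q => dd M q.1 q.2.1 + dd M q.2.1 q.2.2).sum := by
  induction Q using Multiset.induction_on with
  | empty => exact ⟨0, 0, 0, 0, by simp, by simp, by simp, by simp⟩
  | cons q Q ih =>
      obtain ⟨p, xs, zs, w, h1, h2, h3, h4⟩ := ih
      obtain ⟨o1, o2, o3⟩ := q
      rcases o1 with _ | x <;> rcases o3 with _ | z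
      · -- (none, o2, none)
        rcases o2 with _ | y
        · refine ⟨p, xs, zs, w, by simpa using h1, by simpa using h2,
            by simpa using h3, ?_⟩
          simpa using h4
        · refine ⟨p, xs, zs, w + 1, by simpa using h1, by simpa using h2, ?_, ?_⟩
          · simp only [Multiset.map_cons, reals_cons_some, reals_cons_none,
              Multiset.card_cons]
            omega
          · simp only [Multiset.map_cons, Multiset.sum_cons, dd_none_some, dd_some_none]
            push_cast
            linarith
      · -- (none, o2, some z)
        refine ⟨p, xs, z ::ₘ zs, w, by simpa using h1, by simp [h2], ?_, ?_⟩
        · rcases o2 with _ | y <;>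
            · simp only [Multiset.map_cons, reals_cons_some, reals_cons_none,
                Multiset.card_cons]
              omega
        · rcases o2 with _ | y
          · simp only [Multiset.map_cons, Multiset.sum_cons, Multiset.card_cons,
              dd_none_none, dd_none_some]
            push_cast
            linarith
          · simp only [Multiset.map_cons, Multiset.sum_cons, Multiset.card_cons,
              dd_none_some, dd_some_some]
            push_cast
            linarith [dist_nonneg (x := y) (y := z)]
      · -- (some x, o2, none)
        refine ⟨p, x ::ₘ xs, zs, w + 1, by simp [h1], by simpa using h2, ?_, ?_⟩
        · rcases o2 with _ | y <;>
            · simp only [Multiset.map_cons, reals_cons_some, reals_cons_none,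
                Multiset.card_cons]
              omega
        · rcases o2 with _ | y
          · simp only [Multiset.map_cons, Multiset.sum_cons, dd_some_none, dd_none_none]
            push_cast
            linarith
          · simp only [Multiset.map_cons, Multiset.sum_cons, dd_some_some, dd_some_none]
            push_cast
            linarith [dist_nonneg (x := x) (y := y)]
      · -- (some x, o2, some z)
        refine ⟨(x, z) ::ₘ p, xs, zs, w, by simp [h1], by simp [h2], ?_, ?_⟩
        · rcases o2 with _ | y <;>
            · simp only [Multiset.map_cons, reals_cons_some, reals_cons_none,
                Multiset.card_cons]
              omega
        · rcases o2 with _ | y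
          · simp only [Multiset.map_cons, Multiset.sum_cons, dd_some_none, dd_none_some]
            have := hS x z
            linarith
          · simp only [Multiset.map_cons, Multiset.sum_cons, dd_some_some]
            have := dist_triangle x y z
            linarith


-- ===== Part 4: master lemma =====

lemma zip_coe_sum (f : Option X → Option X → ℝ) (L₁ L₂ : List (Option X)) :
    (((L₁.zip L₂ : List (Option X × Option X)) : Multiset (Option X × Option X)).map
        (fun q => f q.1 q.2)).sum = (List.zipWith f L₁ L₂).sum := by
  rw [Multiset.map_coe]
  have : List.map (fun q : Option X × Option X => f q.1 q.2) (L₁.zip L₂)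
      = List.zipWith f L₁ L₂ := List.map_uncurry_zip_eq_zipWith (f := f) (l := L₁) (l' := L₂)
  rw [this, Multiset.sum_coe]

lemma master (hM : 0 ≤ M) (hS : ∀ x y : X, dist x y ≤ M) (a b c : Multiset X)
    (hac : Multiset.card a ≤ Multiset.card c) :
    ∃ w : ℕ, Multiset.card b ≤ Multiset.card c + w ∧
      dE M a c + M * w ≤ dE M a b + dE M b c := by
  obtain ⟨la, lb, hla, hlb, hab⟩ := dE_attained M a b
  obtain ⟨lb2, lc, hlb2, hlc, hbc⟩ := dE_attained M b c
  set n := max (Multiset.card a) (max (Multiset.card b) (Multiset.card c)) with hn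
  have hlena : la.length = Multiset.card a := by rw [← hla, Multiset.coe_card]
  have hlenb : lb.length = Multiset.card b := by rw [← hlb, Multiset.coe_card]
  have hlenb2 : lb2.length = Multiset.card b := by rw [← hlb2, Multiset.coe_card]
  have hlenc : lc.length = Multiset.card c := by rw [← hlc, Multiset.coe_card]
  have hna : la.length ≤ n := by rw [hlena]; exact le_max_left _ _
  have hnb : lb.length ≤ n := by rw [hlenb]; exact le_trans (le_max_left _ _) (le_max_right _ _)
  have hnb2 : lb2.length ≤ n := by
    rw [hlenb2]; exact le_trans (le_max_left _ _) (le_max_right _ _)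
  have hnc : lc.length ≤ n := by
    rw [hlenc]; exact le_trans (le_max_right _ _) (le_max_right _ _)
  set P₁ : Multiset (Option X × Option X) := ↑((pad n la).zip (pad n lb)) with hP₁
  set P₂ : Multiset (Option X × Option X) := ↑((pad n lb2).zip (pad n lc)) with hP₂
  have hlen1 : (pad n la).length = (pad n lb).length := by
    rw [pad_length hna, pad_length hnb]
  have hlen2 : (pad n lb2).length = (pad n lc).length := by
    rw [pad_length hnb2, pad_length hnc]
  have hP1fst : P₁.map Prod.fst = ↑(pad n la) := by
    rw [hP₁, Multiset.map_coe, List.map_fst_zip (le_of_eq hlen1)]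
  have hP1snd : P₁.map Prod.snd = ↑(pad n lb) := by
    rw [hP₁, Multiset.map_coe, List.map_snd_zip (ge_of_eq hlen1)]
  have hP2fst : P₂.map Prod.fst = ↑(pad n lb2) := by
    rw [hP₂, Multiset.map_coe, List.map_fst_zip (le_of_eq hlen2)]
  have hP2snd : P₂.map Prod.snd = ↑(pad n lc) := by
    rw [hP₂, Multiset.map_coe, List.map_snd_zip (ge_of_eq hlen2)]
  have hmid : ((pad n lb : List (Option X)) : Multiset (Option X))
      = ((pad n lb2 : List (Option X)) : Multiset (Option X)) := by
    rw [pad_coe, pad_coe, hlb, hlb2, hlenb, hlenb2]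
  obtain ⟨Q, hQ1, hQ2⟩ := join P₁ P₂ (by rw [hP1snd, hP2fst, hmid])
  have hQa : Q.map (fun q => q.1) = ↑(pad n la) := by
    rw [← hP1fst, ← hQ1, Multiset.map_map]; rfl
  have hQm : Q.map (fun q => q.2.1) = ↑(pad n lb) := by
    rw [← hP1snd, ← hQ1, Multiset.map_map]; rfl
  have hQc : Q.map (fun q => q.2.2) = ↑(pad n lc) := by
    rw [← hP2snd, ← hQ2, Multiset.map_map]; rfl
  obtain ⟨p, xs, zs, w, k1, k2, k3, k4⟩ := coreQ hM hS Q
  rw [hQa, reals_pad, hla] at k1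
  rw [hQc, reals_pad, hlc] at k2
  rw [hQm, reals_pad, hlb, hQc, reals_pad, hlc] at k3
  -- cost identification
  have hcost : (Q.map fun q => dd M q.1 q.2.1 + dd M q.2.1 q.2.2).sum
      = dE M a b + dE M b c := by
    rw [Multiset.sum_map_add]
    have e1 : (Q.map fun q => dd M q.1 q.2.1).sum = dE M a b := by
      have : (Q.map fun q => dd M q.1 q.2.1)
          = P₁.map (fun q => dd M q.1 q.2) := by
        rw [← hQ1, Multiset.map_map]; rfl
      rw [this, hP₁, zip_coe_sum, padsum M n la lb hna hnb, hab, hlena, hlenb,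
        natgap_eq, abs_sub_comm]
    have e2 : (Q.map fun q => dd M q.2.1 q.2.2).sum = dE M b c := by
      have : (Q.map fun q => dd M q.2.1 q.2.2)
          = P₂.map (fun q => dd M q.1 q.2) := by
        rw [← hQ2, Multiset.map_map]; rfl
      rw [this, hP₂, zip_coe_sum, padsum M n lb2 lc hnb2 hnc, hbc, hlenb2, hlenc,
        natgap_eq, abs_sub_comm]
    rw [e1, e2]
  -- xs card le zs card
  have hxz : Multiset.card xs ≤ Multiset.card zs := by
    have c1 := congrArg Multiset.card k1
    have c2 := congrArg Multiset.card k2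
    simp only [Multiset.card_add, Multiset.card_map] at c1 c2
    omega
  have hBC := lemmaB' hM hS p xs zs hxz
  have hD : dE M a c ≤ (p.map fun q => dist q.1 q.2).sum + M * Multiset.card zs := by
    conv_lhs => rw [k1, k2]
    exact hBC
  exact ⟨w, k3, by rw [← hcost] at *; linarith⟩


-- ===== Part 5: dEm lemmas and final =====

lemma dEm_def (M : ℝ) (a c : Multiset X) :
    dEm M a c = dE M a c / ((max (Multiset.card a) (Multiset.card c) : ℕ) : ℝ) := rfl

lemma dEm_nonneg (hM : 0 ≤ M) (a c : Multiset X) : 0 ≤ dEm M a c :=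
  div_nonneg (dE_nonneg hM a c) (Nat.cast_nonneg _)

lemma dEm_comm (M : ℝ) (a c : Multiset X) : dEm M a c = dEm M c a := by
  rw [dEm_def, dEm_def, dE_comm, max_comm]

lemma zipsum_self : ∀ l : List X, (List.zipWith dist l l).sum = 0
  | [] => by simp
  | x :: l => by simp [zipsum_self l]

lemma dE_self (hM : 0 ≤ M) (a : Multiset X) : dE M a a = 0 := by
  refine le_antisymm ?_ (dE_nonneg hM a a)
  have := dE_le hM a.coe_toList a.coe_toList
  simpa [zipsum_self] using this

lemma eq_of_zipsum_eq_zero :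
    ∀ l₁ l₂ : List X, l₁.length = l₂.length → (List.zipWith dist l₁ l₂).sum = 0 → l₁ = l₂
  | [], [], _, _ => rfl
  | [], _ :: _, h, _ => by simp at h
  | _ :: _, [], h, _ => by simp at h
  | x :: l₁, y :: l₂, h, hs => by
      simp only [List.zipWith_cons_cons, List.sum_cons] at hs
      have h1 : dist x y = 0 := le_antisymm
        (by linarith [zipsum_nonneg l₁ l₂]) dist_nonneg
      have h2 : (List.zipWith dist l₁ l₂).sum = 0 := le_antisymm
        (by linarith [dist_nonneg (x := x) (y := y)]) (zipsum_nonneg l₁ l₂)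
      have := eq_of_zipsum_eq_zero l₁ l₂ (by simpa using h) h2
      rw [dist_eq_zero] at h1
      rw [h1, this]

lemma dEm_eq_zero_iff (hM : 0 < M) (a c : Multiset X) : dEm M a c = 0 ↔ a = c := by
  constructor
  · intro h
    rcases Nat.eq_zero_or_pos (max (Multiset.card a) (Multiset.card c)) with h0 | hpos
    · have ha : Multiset.card a = 0 := by omega
      have hc : Multiset.card c = 0 := by omega
      rw [Multiset.card_eq_zero.mp ha, Multiset.card_eq_zero.mp hc]
    · rw [dEm_def, div_eq_zero_iff] at h
      have hD : dE M a c = 0 := by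
        rcases h with h | h
        · exact h
        · exfalso
          rw [Nat.cast_eq_zero] at h
          omega
      obtain ⟨la, lc, hla, hlc, heq⟩ := dE_attained M a c
      rw [hD] at heq
      have hz := zipsum_nonneg la lc
      have habs : (0:ℝ) ≤ M * |(Multiset.card c : ℝ) - (Multiset.card a : ℝ)| :=
        mul_nonneg hM.le (abs_nonneg _)
      have h1 : (List.zipWith dist la lc).sum = 0 := by linarith
      have h2 : |(Multiset.card c : ℝ) - (Multiset.card a : ℝ)| = 0 := by
        rcases (mul_eq_zero.mp (by linarith : M * |(Multiset.card c : ℝ) -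
          (Multiset.card a : ℝ)| = 0)) with h | h
        · exact absurd h (ne_of_gt hM)
        · exact h
      have hcard : Multiset.card a = Multiset.card c := by
        have h3 := abs_eq_zero.mp h2
        have h4 : (Multiset.card c : ℝ) = Multiset.card a := by linarith
        exact_mod_cast h4.symm
      have hlen : la.length = lc.length := by
        rw [← Multiset.coe_card, ← Multiset.coe_card, hla, hlc, hcard]
      rw [← hla, ← hlc, eq_of_zipsum_eq_zero la lc hlen h1]
  · rintro rfl
    rw [dEm_def, dE_self hM.le, zero_div]

lemma dEm_triangle_aux (hM : 0 < M) (hS : ∀ x y : X, dist x y ≤ M) (a b c : Multiset X)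
    (hac : Multiset.card a ≤ Multiset.card c) :
    dEm M a c ≤ dEm M a b + dEm M b c := by
  rcases Nat.eq_zero_or_pos (Multiset.card c) with hc0 | hcpos
  · have ha0 : a = 0 := Multiset.card_eq_zero.mp (by omega)
    have hc0' : c = 0 := Multiset.card_eq_zero.mp hc0
    subst ha0; subst hc0'
    rw [dEm_def, dE_self hM.le, zero_div]
    exact add_nonneg (dEm_nonneg hM.le _ _) (dEm_nonneg hM.le _ _)
  · obtain ⟨w, hw, hD⟩ := master hM.le hS a b c hac
    have hmaxac : max (Multiset.card a) (Multiset.card c) = Multiset.card c :=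
      max_eq_right hac
    have hγpos : (0:ℝ) < Multiset.card c := by exact_mod_cast hcpos
    rcases le_or_gt (Multiset.card b) (Multiset.card c) with hbc | hcb
    · have hmaxbc : max (Multiset.card b) (Multiset.card c) = Multiset.card c :=
        max_eq_right hbc
      have h1 : dE M a c ≤ dE M a b + dE M b c := by
        have : (0:ℝ) ≤ M * w := mul_nonneg hM.le (Nat.cast_nonneg w)
        linarith
      rw [dEm_def, dEm_def, dEm_def, hmaxac, hmaxbc]
      rcases Nat.eq_zero_or_pos (max (Multiset.card a) (Multiset.card b)) with hab0 | habpos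
      · have ha : a = 0 := Multiset.card_eq_zero.mp (by omega)
        have hb : b = 0 := Multiset.card_eq_zero.mp (by omega)
        subst ha; subst hb
        simp only [dE_self hM.le]
        rw [zero_div]
        simp
      · have hm2 : dE M a b / (Multiset.card c : ℝ)
            ≤ dE M a b / ((max (Multiset.card a) (Multiset.card b) : ℕ) : ℝ) := by
          refine div_le_div_of_nonneg_left (dE_nonneg hM.le a b) ?_ ?_
          · exact_mod_cast habpos
          · exact_mod_cast Nat.max_le.mpr ⟨hac, hbc⟩
        calc dE M a c / (Multiset.card c : ℝ)
            ≤ (dE M a b + dE M b c) / (Multiset.card c : ℝ) :=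
              (div_le_div_iff_of_pos_right hγpos).mpr h1
          _ = dE M a b / (Multiset.card c : ℝ) + dE M b c / (Multiset.card c : ℝ) :=
              add_div _ _ _
          _ ≤ _ := by linarith
    · have hmaxab : max (Multiset.card a) (Multiset.card b) = Multiset.card b :=
        max_eq_right (hac.trans hcb.le)
      have hmaxbc : max (Multiset.card b) (Multiset.card c) = Multiset.card b :=
        max_eq_left hcb.le
      have hβpos : (0:ℝ) < Multiset.card b := by
        have : (0:ℕ) < Multiset.card b := lt_of_le_of_lt (Nat.zero_le _) hcb
        exact_mod_cast this
      rw [dEm_def, dEm_def, dEm_def, hmaxac, hmaxab, hmaxbc, ← add_div,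
        div_le_div_iff₀ hγpos hβpos]
      have h2 : dE M a c ≤ M * Multiset.card c := dE_le_Mmax hM.le hS hac
      have h3 : (Multiset.card b : ℝ) ≤ (Multiset.card c : ℝ) + w := by exact_mod_cast hw
      have hβγ : (Multiset.card c : ℝ) ≤ (Multiset.card b : ℝ) := by exact_mod_cast hcb.le
      have h5 : (0:ℝ) ≤ (M * Multiset.card c - dE M a c)
          * ((Multiset.card b : ℝ) - Multiset.card c) :=
        mul_nonneg (sub_nonneg.mpr h2) (sub_nonneg.mpr hβγ)
      have h6 : (0:ℝ) ≤ (Multiset.card c : ℝ)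
          * (dE M a b + dE M b c - (dE M a c + M * w)) :=
        mul_nonneg hγpos.le (sub_nonneg.mpr hD)
      have h7 : (0:ℝ) ≤ M * (Multiset.card c : ℝ)
          * ((Multiset.card c : ℝ) + w - Multiset.card b) :=
        mul_nonneg (mul_nonneg hM.le hγpos.le) (sub_nonneg.mpr h3)
      nlinarith [h5, h6, h7]

lemma dEm_triangle (hM : 0 < M) (hS : ∀ x y : X, dist x y ≤ M) (a b c : Multiset X) :
    dEm M a c ≤ dEm M a b + dEm M b c := by
  rcases le_total (Multiset.card a) (Multiset.card c) with h | h
  · exact dEm_triangle_aux hM hS a b c h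
  · have := dEm_triangle_aux hM hS c b a h
    rw [dEm_comm M c a, dEm_comm M c b, dEm_comm M b a] at this
    linarith


-- ===== Part 6: singleton computations =====

lemma dE_singleton_singleton (hM : 0 ≤ M) (x y : X) :
    dE M {x} ({y} : Multiset X) = dist x y := by
  refine le_antisymm ?_ ?_
  · have := dE_le hM (la := [x]) (lc := [y])
      (Multiset.coe_singleton x) (Multiset.coe_singleton y)
    simpa using this
  · refine le_csInf (dES_nonempty M _ _) ?_
    rintro r ⟨la, lc, h1, h2, rfl⟩
    rw [Multiset.coe_eq_singleton] at h1 h2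
    subst h1; subst h2
    simp

lemma dE_singleton_pair (hM : 0 ≤ M) (x y : X) :
    dE M {x} (x ::ₘ ({y} : Multiset X)) = M := by
  refine le_antisymm ?_ ?_
  · have h2 : (([x, y] : List X) : Multiset X) = x ::ₘ ({y} : Multiset X) := by
      rw [← Multiset.cons_coe, Multiset.coe_singleton]
    have := dE_le hM (la := [x]) (lc := [x, y]) (Multiset.coe_singleton x) h2
    simpa [show |(2:ℝ) - 1| = 1 from by norm_num] using this
  · have := dE_gap_le hM ({x} : Multiset X) (x ::ₘ ({y} : Multiset X))
    simp only [Multiset.card_cons, Multiset.card_singleton] at this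
    norm_num at this
    exact this

lemma dE_pair_singleton (hM : 0 ≤ M) (x y : X) :
    dE M (x ::ₘ ({y} : Multiset X)) {y} = M := by
  rw [dE_comm]
  refine le_antisymm ?_ ?_
  · have h2 : (([y, x] : List X) : Multiset X) = x ::ₘ ({y} : Multiset X) := by
      rw [← Multiset.cons_coe, Multiset.coe_singleton, ← Multiset.cons_zero x,
        ← Multiset.cons_zero y, Multiset.cons_swap]
    have := dE_le hM (la := [y]) (lc := [y, x]) (Multiset.coe_singleton y) h2
    simpa [show |(2:ℝ) - 1| = 1 from by norm_num] using this
  · have := dE_gap_le hM ({y} : Multiset X) (x ::ₘ ({y} : Multiset X))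
    simp only [Multiset.card_cons, Multiset.card_singleton] at this
    norm_num at this
    exact this

lemma dEm_singleton_singleton (hM : 0 ≤ M) (x y : X) :
    dEm M {x} ({y} : Multiset X) = dist x y := by
  rw [dEm_def, dE_singleton_singleton hM]
  simp

lemma dEm_singleton_pair (hM : 0 ≤ M) (x y : X) :
    dEm M {x} (x ::ₘ ({y} : Multiset X)) = M / 2 := by
  rw [dEm_def, dE_singleton_pair hM]
  norm_num

lemma dEm_pair_singleton (hM : 0 ≤ M) (x y : X) :
    dEm M (x ::ₘ ({y} : Multiset X)) {y} = M / 2 := by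
  rw [dEm_def, dE_pair_singleton hM]
  norm_num

end DEaux

/-- If `d` is bounded then `d_Em` is a metric on `E` iff `(sup d)/M ≤ 1`. -/
theorem stmt_2 {X : Type*} [MetricSpace X] [Nontrivial X] (M : ℝ) (hM : 0 < M)
    (hbdd : ∃ B : ℝ, ∀ x y : X, dist x y ≤ B) :
    IsMetric (dEm (X := X) M) ↔ supD X / M ≤ 1 := by
  have hM0 : (0:ℝ) ≤ M := hM.le
  obtain ⟨B, hB⟩ := hbdd
  have hbddset : BddAbove {r : ℝ | ∃ x y : X, dist x y = r} := by
    refine ⟨B, ?_⟩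
    rintro r ⟨x, y, rfl⟩
    exact hB x y
  constructor
  · intro h
    rw [div_le_one hM]
    refine Real.sSup_le ?_ hM.le
    rintro r ⟨x, y, rfl⟩
    have tri := h.2.2 ({x} : Multiset X) (x ::ₘ ({y} : Multiset X)) ({y} : Multiset X)
    rw [DEaux.dEm_singleton_singleton hM0, DEaux.dEm_singleton_pair hM0,
      DEaux.dEm_pair_singleton hM0] at tri
    linarith
  · intro hθ
    have hsup : supD X ≤ M := by rw [div_le_one hM] at hθ; exact hθ
    have hS : ∀ x y : X, dist x y ≤ M := fun x y =>
      le_trans (le_csSup hbddset ⟨x, y, rfl⟩) hsup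
    exact ⟨fun a c => DEaux.dEm_eq_zero_iff hM a c, fun a c => DEaux.dEm_comm M a c,
      fun a b c => DEaux.dEm_triangle hM hS a b c⟩
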